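/- arXiv:1404.3120 — 3 statements merged into one kernel-verified Lean document; each statement's English description precedes it below -/
import Mathlib

section
/- For every imaginary unit I ∈ 𝕊, the 4-diameter of the unit ball of ℍ is strictly larger than the 4-diameter of its bidimensional slice: d₄(𝔹) > d₄(𝔹_I), where 𝔹_I = 𝔹 ∩ L_I. -/
noncomputable section

open Filter Metric Set

local notation "ℍ" => Quaternion ℝ

/-- The slice (complex plane) `L_I = ℝ + ℝI` through an imaginary unit `I`. -/
def sliceL (I : ℍ) : Set ℍ := {z : ℍ | ∃ x y : ℝ, z = (x : ℍ) + y • I}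

/-- The `n`-diameter of a subset `E ⊆ ℍ`:
`d_n(E) = sup_{w₁,…,w_n ∈ E} (∏_{1 ≤ j < k ≤ n} |w_k − w_j|)^{2/(n(n−1))}`. -/
def nDiamReal (n : ℕ) (E : Set ℍ) : ℝ :=
  sSup {x : ℝ | ∃ w : Fin n → ℍ, (∀ i, w i ∈ E) ∧
    x = (∏ p ∈ Finset.univ.filter (fun p : Fin n × Fin n => p.1 < p.2), ‖w p.2 - w p.1‖) ^
      (2 / ((n : ℝ) * ((n : ℝ) - 1)))}

section Aux

open Matrix
open scoped ComplexOrder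

private lemma amgm4' {a b c d : ℝ} (ha : 0 ≤ a) (hb : 0 ≤ b) (hc : 0 ≤ c) (hd : 0 ≤ d)
    (h : a + b + c + d ≤ 16) : a * b * c * d ≤ 256 := by
  have h1 : a * b ≤ ((a+b)/2)^2 := by nlinarith [sq_nonneg (a-b)]
  have h2 : c * d ≤ ((c+d)/2)^2 := by nlinarith [sq_nonneg (c-d)]
  have hu : (0:ℝ) ≤ (a+b)/2 := by linarith
  have hv : (0:ℝ) ≤ (c+d)/2 := by linarith
  have h3 : ((a+b)/2) * ((c+d)/2) ≤ 16 := by nlinarith [sq_nonneg ((a+b)/2 - (c+d)/2)]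
  have h4 : a * b * (c * d) ≤ ((a+b)/2)^2 * ((c+d)/2)^2 :=
    mul_le_mul h1 h2 (mul_nonneg hc hd) (sq_nonneg _)
  nlinarith [mul_nonneg hu hv]

private lemma abs_det_vandermonde_le' (z : Fin 4 → ℂ) (hz : ∀ i, ‖z i‖ ≤ 1) :
    ‖Matrix.det (Matrix.vandermonde z)‖ ≤ 16 := by
  set V := Matrix.vandermonde z with hV
  set G := V * V.conjTranspose with hGdef
  have hG : G.PosSemidef := Matrix.posSemidef_self_mul_conjTranspose V
  have hH : G.IsHermitian := hG.1
  have htr2 : G.trace = ((∑ i, hH.eigenvalues i : ℝ) : ℂ) := by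
    conv_lhs => rw [hH.spectral_theorem]
    rw [Unitary.conjStarAlgAut_apply]
    rw [Matrix.trace_mul_cycle]
    rw [show (star (hH.eigenvectorUnitary : Matrix (Fin 4) (Fin 4) ℂ)) *
        (hH.eigenvectorUnitary : Matrix (Fin 4) (Fin 4) ℂ) = 1 from
      Matrix.UnitaryGroup.star_mul_self _]
    rw [one_mul, Matrix.trace_diagonal]
    push_cast
    rfl
  have htr1 : G.trace = ((∑ i, ∑ k, Complex.normSq (V i k) : ℝ) : ℂ) := by
    simp only [Matrix.trace, Matrix.diag, hGdef, Matrix.mul_apply,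
      Matrix.conjTranspose_apply, Complex.star_def, Complex.mul_conj]
    push_cast
    rfl
  have hsum : (∑ i, hH.eigenvalues i) ≤ 16 := by
    have := htr1.symm.trans htr2
    have h2 : (∑ i, ∑ k, Complex.normSq (V i k) : ℝ) = ∑ i, hH.eigenvalues i :=
      Complex.ofReal_injective this
    rw [← h2]
    have hb : ∀ i k : Fin 4, Complex.normSq (V i k) ≤ 1 := by
      intro i k
      have : ‖V i k‖ ≤ 1 := by
        rw [hV, Matrix.vandermonde_apply, norm_pow]
        exact pow_le_one₀ (norm_nonneg _) (hz i)
      calc Complex.normSq (V i k) = ‖V i k‖ ^ 2 := (Complex.sq_norm _).symm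
        _ ≤ 1 := pow_le_one₀ (norm_nonneg _) this
    calc (∑ i, ∑ k, Complex.normSq (V i k) : ℝ) ≤ ∑ _i : Fin 4, ∑ _k : Fin 4, (1:ℝ) :=
          Finset.sum_le_sum fun i _ => Finset.sum_le_sum fun k _ => hb i k
      _ = 16 := by norm_num
  have hdet : (Complex.normSq (V.det) : ℂ) = ((∏ i, hH.eigenvalues i : ℝ) : ℂ) := by
    rw [← Complex.mul_conj]
    calc V.det * (starRingEnd ℂ) V.det = G.det := by
          rw [hGdef, Matrix.det_mul, Matrix.det_conjTranspose]; rfl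
      _ = _ := by rw [hH.det_eq_prod_eigenvalues]; push_cast; rfl
  have hprod : Complex.normSq V.det = ∏ i, hH.eigenvalues i := Complex.ofReal_injective hdet
  have h256 : Complex.normSq V.det ≤ 256 := by
    rw [hprod]
    have hnn := fun i => hG.eigenvalues_nonneg i
    rw [Fin.prod_univ_four]
    refine amgm4' (hnn 0) (hnn 1) (hnn 2) (hnn 3) ?_
    calc _ = ∑ i, hH.eigenvalues i := by rw [Fin.sum_univ_four]
      _ ≤ 16 := hsum
  calc ‖V.det‖ = Real.sqrt (Complex.normSq V.det) := Complex.norm_def _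
    _ ≤ Real.sqrt 256 := Real.sqrt_le_sqrt h256
    _ = 16 := by rw [show (256:ℝ) = 16^2 by norm_num, Real.sqrt_sq (by norm_num)]

private lemma prod6' {α : Type*} [CommMonoid α] (f : Fin 4 → Fin 4 → α) :
    ∏ p ∈ Finset.univ.filter (fun p : Fin 4 × Fin 4 => p.1 < p.2), f p.1 p.2
    = f 0 1 * f 0 2 * f 0 3 * f 1 2 * f 1 3 * f 2 3 := by
  rw [show (Finset.univ.filter (fun p : Fin 4 × Fin 4 => p.1 < p.2))
    = ({(0,1),(0,2),(0,3),(1,2),(1,3),(2,3)} : Finset (Fin 4 × Fin 4)) from by decide]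
  rw [Finset.prod_insert (by decide), Finset.prod_insert (by decide),
    Finset.prod_insert (by decide), Finset.prod_insert (by decide),
    Finset.prod_insert (by decide), Finset.prod_singleton]
  simp only [mul_assoc]

private lemma prod_ioi' (f : Fin 4 → Fin 4 → ℂ) :
    ∏ i : Fin 4, ∏ j ∈ Finset.Ioi i, f i j
    = f 0 1 * f 0 2 * f 0 3 * (f 1 2 * f 1 3) * f 2 3 := by
  rw [Fin.prod_univ_four]
  rw [show Finset.Ioi (0 : Fin 4) = {1,2,3} from by decide,
    show Finset.Ioi (1 : Fin 4) = {2,3} from by decide,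
    show Finset.Ioi (2 : Fin 4) = {3} from by decide,
    show Finset.Ioi (3 : Fin 4) = {} from by decide]
  rw [Finset.prod_insert (by decide), Finset.prod_insert (by decide), Finset.prod_singleton,
    Finset.prod_insert (by decide), Finset.prod_singleton, Finset.prod_singleton,
    Finset.prod_empty]
  ring

private lemma planar_bound' (z : Fin 4 → ℂ) (hz : ∀ i, ‖z i‖ ≤ 1) :
    ∏ p ∈ Finset.univ.filter (fun p : Fin 4 × Fin 4 => p.1 < p.2),
      ‖z p.2 - z p.1‖ ≤ 16 := by
  have h := abs_det_vandermonde_le' z hz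
  rw [Matrix.det_vandermonde, prod_ioi' (fun i j => z j - z i)] at h
  simp only [norm_mul] at h
  rw [prod6' (fun i j => ‖z j - z i‖)]
  exact le_of_eq_of_le (by ring) h

private lemma quat_unit_facts {I : ℍ} (hI : I ^ 2 = -1) :
    I.re = 0 ∧ Quaternion.normSq I = 1 := by
  have hn : Quaternion.normSq I = 1 := by
    have h1 : Quaternion.normSq (I ^ 2) = 1 := by rw [hI]; simp
    rw [pow_two, _root_.map_mul] at h1
    have := Quaternion.normSq_nonneg (a := I)
    nlinarith
  constructor
  · have hre : (I ^ 2).re = -1 := by rw [hI]; simp; rfl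
    rw [pow_two, Quaternion.re_mul] at hre
    simp only [Quaternion.normSq_def'] at hn
    nlinarith
  · exact hn

private lemma norm_slice' {I : ℍ} (hI : I ^ 2 = -1) (a b : ℝ) :
    ‖(a : ℍ) + b • I‖ = ‖(⟨a, b⟩ : ℂ)‖ := by
  obtain ⟨hre, hn⟩ := quat_unit_facts hI
  have key : Quaternion.normSq ((a : ℍ) + b • I) = a ^ 2 + b ^ 2 := by
    simp only [Quaternion.normSq_def'] at hn ⊢
    simp only [Quaternion.re_add, Quaternion.imI_add, Quaternion.imJ_add, Quaternion.imK_add,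
      Quaternion.re_coe, Quaternion.imI_coe, Quaternion.imJ_coe, Quaternion.imK_coe,
      Quaternion.re_smul, Quaternion.imI_smul, Quaternion.imJ_smul, Quaternion.imK_smul,
      smul_eq_mul, hre]
    linear_combination b ^ 2 * hn - b ^ 2 * I.re * hre
  have hq : ‖(a : ℍ) + b • I‖ = Real.sqrt (Quaternion.normSq ((a : ℍ) + b • I)) := by
    rw [Quaternion.normSq_eq_norm_mul_self, Real.sqrt_mul_self (norm_nonneg _)]
  rw [hq, key, Complex.norm_def, Complex.normSq_mk]
  ring_nf

private def tp4 : Fin 4 → ℍ :=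
  ![⟨0, 57/100, 57/100, 57/100⟩, ⟨0, 57/100, -(57/100), -(57/100)⟩,
    ⟨0, -(57/100), 57/100, -(57/100)⟩, ⟨0, -(57/100), -(57/100), 57/100⟩]

private lemma tp4_normSq (i : Fin 4) : Quaternion.normSq (tp4 i) = 9747/10000 := by
  fin_cases i <;> (rw [Quaternion.normSq_def']; simp [tp4]; norm_num)

private lemma tp4_diff (i j : Fin 4) (h : i < j) : ‖tp4 j - tp4 i‖ ^ 2 = 25992/10000 := by
  rw [sq, ← Quaternion.normSq_eq_norm_mul_self]
  fin_cases i <;> fin_cases j <;>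
    first
      | exact absurd h (by decide)
      | (rw [Quaternion.normSq_def']; simp only [Quaternion.re_sub, Quaternion.imI_sub,
          Quaternion.imJ_sub, Quaternion.imK_sub]; simp [tp4]; norm_num)

end Aux

/-- For every imaginary unit `I ∈ 𝕊`, `d₄(𝔹) > d₄(𝔹_I)` where `𝔹_I = 𝔹 ∩ L_I`. -/
theorem d4_ball_gt_d4_slice (I : ℍ) (hI : I ^ 2 = -1) :
    nDiamReal 4 (Metric.ball 0 1) > nDiamReal 4 (Metric.ball 0 1 ∩ sliceL I) := by
  have hexp : (2 / (((4:ℕ) : ℝ) * (((4:ℕ) : ℝ) - 1))) = (6⁻¹ : ℝ) := by norm_num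
  unfold nDiamReal
  rw [hexp]
  have hnormlt : ∀ q : ℍ, Quaternion.normSq q < 1 → ‖q‖ < 1 := by
    intro q h
    have h2 : ‖q‖ * ‖q‖ < 1 := by rwa [← Quaternion.normSq_eq_norm_mul_self]
    nlinarith [norm_nonneg q]
  have htp_mem : ∀ i, tp4 i ∈ Metric.ball (0:ℍ) 1 := by
    intro i
    rw [mem_ball_zero_iff]
    apply hnormlt
    rw [tp4_normSq]
    norm_num
  set P : ℝ := ∏ p ∈ Finset.univ.filter (fun p : Fin 4 × Fin 4 => p.1 < p.2),
    ‖tp4 p.2 - tp4 p.1‖ with hPdef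
  have hPnn : 0 ≤ P := Finset.prod_nonneg fun _ _ => norm_nonneg _
  have hP2 : P ^ 2 = (25992/10000 : ℝ) ^ 6 := by
    calc P ^ 2 = ‖tp4 1 - tp4 0‖^2 * ‖tp4 2 - tp4 0‖^2 * ‖tp4 3 - tp4 0‖^2 * ‖tp4 2 - tp4 1‖^2
          * ‖tp4 3 - tp4 1‖^2 * ‖tp4 3 - tp4 2‖^2 := by
          rw [hPdef, prod6' (fun i j => ‖tp4 j - tp4 i‖)]; ring
      _ = _ := by
          rw [tp4_diff 0 1 (by decide), tp4_diff 0 2 (by decide), tp4_diff 0 3 (by decide),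
            tp4_diff 1 2 (by decide), tp4_diff 1 3 (by decide), tp4_diff 2 3 (by decide)]
          norm_num
  have hP16 : 16 < P := by nlinarith [hP2, hPnn]
  -- bddAbove for ball set
  have hbdd : BddAbove {x : ℝ | ∃ w : Fin 4 → ℍ, (∀ i, w i ∈ Metric.ball (0:ℍ) 1) ∧
      x = (∏ p ∈ Finset.univ.filter (fun p : Fin 4 × Fin 4 => p.1 < p.2), ‖w p.2 - w p.1‖)
        ^ (6⁻¹ : ℝ)} := by
    refine ⟨2, ?_⟩
    rintro x ⟨w, hw, rfl⟩
    have hQ : (∏ p ∈ Finset.univ.filter (fun p : Fin 4 × Fin 4 => p.1 < p.2),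
        ‖w p.2 - w p.1‖) ≤ 64 := by
      calc _ ≤ ∏ _p ∈ Finset.univ.filter (fun p : Fin 4 × Fin 4 => p.1 < p.2), (2:ℝ) := by
            refine Finset.prod_le_prod (fun _ _ => norm_nonneg _) ?_
            intro p _
            have h1 := mem_ball_zero_iff.mp (hw p.2)
            have h2 := mem_ball_zero_iff.mp (hw p.1)
            calc ‖w p.2 - w p.1‖ ≤ ‖w p.2‖ + ‖w p.1‖ := norm_sub_le _ _
              _ ≤ 2 := by linarith
        _ = 64 := by
            rw [Finset.prod_const,
              show (Finset.univ.filter (fun p : Fin 4 × Fin 4 => p.1 < p.2)).card = 6 from by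
                decide]
            norm_num
    have hQ0 : (0:ℝ) ≤ ∏ p ∈ Finset.univ.filter (fun p : Fin 4 × Fin 4 => p.1 < p.2),
        ‖w p.2 - w p.1‖ := Finset.prod_nonneg fun _ _ => norm_nonneg _
    calc _ ≤ (64:ℝ) ^ (6⁻¹:ℝ) := Real.rpow_le_rpow hQ0 hQ (by norm_num)
      _ = 2 := by
          rw [show (64:ℝ) = 2 ^ (6:ℕ) by norm_num, ← Real.rpow_natCast 2 6,
            ← Real.rpow_mul (by norm_num)]
          norm_num
  -- ball sup ≥ P^(1/6)
  have hball : P ^ (6⁻¹:ℝ) ≤ sSup {x : ℝ | ∃ w : Fin 4 → ℍ,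
      (∀ i, w i ∈ Metric.ball (0:ℍ) 1) ∧
      x = (∏ p ∈ Finset.univ.filter (fun p : Fin 4 × Fin 4 => p.1 < p.2), ‖w p.2 - w p.1‖)
        ^ (6⁻¹ : ℝ)} :=
    le_csSup hbdd ⟨tp4, htp_mem, by rw [hPdef]⟩
  -- slice sup ≤ 16^(1/6)
  have hslice : sSup {x : ℝ | ∃ w : Fin 4 → ℍ,
      (∀ i, w i ∈ Metric.ball (0:ℍ) 1 ∩ sliceL I) ∧
      x = (∏ p ∈ Finset.univ.filter (fun p : Fin 4 × Fin 4 => p.1 < p.2), ‖w p.2 - w p.1‖)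
        ^ (6⁻¹ : ℝ)} ≤ (16:ℝ) ^ (6⁻¹:ℝ) := by
    apply csSup_le
    · have h0b : (0:ℍ) ∈ Metric.ball (0:ℍ) 1 := mem_ball_self one_pos
      have h0s : (0:ℍ) ∈ sliceL I := ⟨0, 0, by simp⟩
      exact ⟨_, ⟨fun _ => 0, fun i => ⟨h0b, h0s⟩, rfl⟩⟩
    · rintro x ⟨w, hw, rfl⟩
      choose X Y hXY using fun i => (hw i).2
      set z : Fin 4 → ℂ := fun i => ⟨X i, Y i⟩ with hz
      have hz1 : ∀ i, ‖z i‖ ≤ 1 := by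
        intro i
        have := mem_ball_zero_iff.mp (hw i).1
        rw [hXY i, norm_slice' hI] at this
        exact le_of_lt this
      have hnorm : ∀ i j : Fin 4, ‖w j - w i‖ = ‖z j - z i‖ := by
        intro i j
        rw [hXY i, hXY j]
        have heq : ((X j : ℍ) + Y j • I) - ((X i : ℍ) + Y i • I)
            = ((X j - X i : ℝ) : ℍ) + (Y j - Y i) • I := by
          rw [Quaternion.coe_sub, sub_smul]; abel
        rw [heq, norm_slice' hI]
        congr 1
      have hprodeq : (∏ p ∈ Finset.univ.filter (fun p : Fin 4 × Fin 4 => p.1 < p.2),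
          ‖w p.2 - w p.1‖) = ∏ p ∈ Finset.univ.filter (fun p : Fin 4 × Fin 4 => p.1 < p.2),
          ‖z p.2 - z p.1‖ :=
        Finset.prod_congr rfl fun p _ => hnorm p.1 p.2
      rw [hprodeq]
      exact Real.rpow_le_rpow (Finset.prod_nonneg fun _ _ => norm_nonneg _)
        (planar_bound' z hz1) (by norm_num)
  have hlt : (16:ℝ) ^ (6⁻¹:ℝ) < P ^ (6⁻¹:ℝ) :=
    Real.rpow_lt_rpow (by norm_num) hP16 (by norm_num)
  exact lt_of_le_of_lt hslice (lt_of_lt_of_le hlt hball)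
end
end

section
/- Given an integer n ≥ 2 and n points w₁, …, w_n in the closed unit disc 𝔻̄ = {z ∈ ℂ : |z| ≤ 1}, one has ∏_{1≤j<k≤n} |w_j − w_k| ≤ n^{n/2}. -/
noncomputable section

open Finset Matrix
open scoped ComplexOrder

lemma pair_prod_aux (n : ℕ) (f : Fin n → Fin n → ℝ) :
    (∏ p ∈ Finset.univ.filter (fun p : Fin n × Fin n => p.1 < p.2), f p.1 p.2)
      = ∏ i, ∏ j ∈ Ioi i, f i j := by
  rw [← Finset.prod_sigma (Finset.univ) (fun i => Ioi i) (fun x => f x.1 x.2)]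
  refine Finset.prod_bij (fun p _ => ⟨p.1, p.2⟩) ?_ ?_ ?_ ?_
  · rintro ⟨i, j⟩ h
    simp only [mem_filter, mem_univ, true_and] at h
    simp [h]
  · rintro ⟨i, j⟩ _ ⟨i', j'⟩ _ h
    simpa [Sigma.mk.inj_iff, Prod.ext_iff] using h
  · rintro ⟨i, j⟩ h
    simp only [mem_sigma, mem_univ, mem_Ioi, true_and] at h
    exact ⟨(i, j), by simp [h], rfl⟩
  · rintro ⟨i, j⟩ _; rfl


/-- For `n ≥ 2` points `w₁, …, w_n` in the closed unit disc of `ℂ`,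
`∏_{1 ≤ j < k ≤ n} |w_j − w_k| ≤ n^{n/2}`. -/
theorem prod_dist_le_pow (n : ℕ) (hn : 2 ≤ n) (w : Fin n → ℂ)
    (hw : ∀ i, ‖w i‖ ≤ 1) :
    (∏ p ∈ Finset.univ.filter (fun p : Fin n × Fin n => p.1 < p.2),
        ‖w p.1 - w p.2‖) ≤ (n : ℝ) ^ ((n : ℝ) / 2) := by
  have hn0 : 0 < n := by omega
  set A : Matrix (Fin n) (Fin n) ℂ := Matrix.vandermonde w with hA
  -- Step 1 : LHS = |det A|
  have h1 : (∏ p ∈ Finset.univ.filter (fun p : Fin n × Fin n => p.1 < p.2),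
      ‖w p.1 - w p.2‖) = ‖A.det‖ := by
    rw [hA, Matrix.det_vandermonde, norm_prod,
      pair_prod_aux n (fun i j => ‖w i - w j‖)]
    refine Finset.prod_congr rfl fun i _ => ?_
    rw [norm_prod]
    exact Finset.prod_congr rfl fun j _ => by rw [← norm_neg, neg_sub]
  -- Gram matrix
  set G : Matrix (Fin n) (Fin n) ℂ := Aᴴ * A with hG
  have hGpsd : G.PosSemidef := Matrix.posSemidef_conjTranspose_mul_self A
  have hGh : G.IsHermitian := hGpsd.1
  -- Step 2 : |det A|^2 = ∏ eigenvalues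
  have h2 : ‖A.det‖ ^ 2 = ∏ i, hGh.eigenvalues i := by
    have key2 : G.det = ((‖A.det‖ ^ 2 : ℝ) : ℂ) := by
      rw [hG, Matrix.det_mul, Matrix.det_conjTranspose,
        Complex.star_def, ← Complex.normSq_eq_conj_mul_self]
      push_cast [Complex.normSq_eq_norm_sq]
      ring
    have key := key2.symm.trans hGh.det_eq_prod_eigenvalues
    rw [← RCLike.ofReal_prod] at key
    exact RCLike.ofReal_inj.mp key
  -- eigenvalues nonneg
  have hev : ∀ i, 0 ≤ hGh.eigenvalues i := fun i => hGpsd.eigenvalues_nonneg i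
  -- Step 3 : sum of eigenvalues = trace ≤ n^2
  have htr : (∑ i, hGh.eigenvalues i) ≤ (n : ℝ)^2 := by
    have hteq : (G.trace : ℂ) = ((∑ i, hGh.eigenvalues i : ℝ) : ℂ) := by
      conv_lhs => rw [hGh.spectral_theorem, Unitary.conjStarAlgAut_apply]
      rw [trace_mul_cycle]
      simp [Matrix.trace_diagonal, ← mul_assoc,
        (Matrix.mem_unitaryGroup_iff').mp (hGh.eigenvectorUnitary).2]
    have hteq2 : (G.trace : ℂ) = ((∑ i, ∑ j, Complex.normSq (A j i) : ℝ) : ℂ) := by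
      rw [hG, Matrix.trace]
      push_cast
      refine Finset.sum_congr rfl fun i _ => ?_
      rw [Matrix.diag_apply, Matrix.mul_apply]
      refine Finset.sum_congr rfl fun j _ => ?_
      rw [Matrix.conjTranspose_apply, Complex.star_def, ← Complex.normSq_eq_conj_mul_self]
    have hsum : (∑ i, hGh.eigenvalues i) = ∑ i, ∑ j, Complex.normSq (A j i) :=
      Complex.ofReal_inj.mp (hteq.symm.trans hteq2)
    rw [hsum]
    calc ∑ i, ∑ j, Complex.normSq (A j i) ≤ ∑ _i : Fin n, ∑ _j : Fin n, (1:ℝ) := by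
          refine Finset.sum_le_sum fun i _ => Finset.sum_le_sum fun j _ => ?_
          rw [← Complex.sq_norm]
          have hb : ‖A j i‖ ≤ 1 := by
            rw [hA, Matrix.vandermonde_apply, norm_pow]
            exact pow_le_one₀ (norm_nonneg _) (hw j)
          nlinarith [norm_nonneg (A j i)]
      _ = (n : ℝ)^2 := by simp [sq]
  -- Step 4 : AM-GM
  have h4 : (∏ i, hGh.eigenvalues i) ≤ (n : ℝ)^n := by
    have hamgm := Real.geom_mean_le_arith_mean_weighted Finset.univ
      (fun _ => (n : ℝ)⁻¹) hGh.eigenvalues (fun i _ => by positivity)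
      (by simp [Finset.card_univ]; field_simp) (fun i _ => hev i)
    have hpow : (∏ i, hGh.eigenvalues i ^ ((n:ℝ)⁻¹)) ^ (n : ℕ)
        = ∏ i, hGh.eigenvalues i := by
      rw [← Finset.prod_pow]
      refine Finset.prod_congr rfl fun i _ => ?_
      rw [← Real.rpow_natCast (hGh.eigenvalues i ^ ((n:ℝ)⁻¹)), ← Real.rpow_mul (hev i),
        inv_mul_cancel₀ (by exact_mod_cast hn0.ne'), Real.rpow_one]
    calc (∏ i, hGh.eigenvalues i) = (∏ i, hGh.eigenvalues i ^ ((n:ℝ)⁻¹)) ^ (n : ℕ) := hpow.symm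
      _ ≤ (∑ i, (n:ℝ)⁻¹ * hGh.eigenvalues i) ^ (n : ℕ) := by
          refine pow_le_pow_left₀ ?_ hamgm n
          exact Finset.prod_nonneg fun i _ => Real.rpow_nonneg (hev i) _
      _ ≤ (n : ℝ)^n := by
          refine pow_le_pow_left₀ ?_ ?_ n
          · exact Finset.sum_nonneg fun i _ => mul_nonneg (by positivity) (hev i)
          · rw [← Finset.mul_sum, inv_mul_le_iff₀ (by positivity)]
            calc (∑ i, hGh.eigenvalues i) ≤ (n:ℝ)^2 := htr
              _ = (n:ℝ) * n := by ring
  -- conclude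
  rw [h1]
  have hc : ((n:ℝ) ^ ((n : ℝ)/2))^2 = (n:ℝ)^n := by
    rw [← Real.rpow_natCast ((n:ℝ) ^ ((n : ℝ)/2)) 2, ← Real.rpow_mul (by positivity)]
    norm_num [Real.rpow_natCast]
  have hsq : ‖A.det‖^2 ≤ ((n:ℝ) ^ ((n : ℝ)/2))^2 := by
    rw [hc, h2]; exact h4
  have habs : 0 ≤ ‖A.det‖ := norm_nonneg _
  have hcnn : (0:ℝ) ≤ (n:ℝ) ^ ((n : ℝ)/2) := by positivity
  nlinarith [hsq, habs, hcnn]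
end
end

section
/- Given an integer n ≥ 2 and n points w₁, …, w_n in the closed unit disc 𝔻̄ = {z ∈ ℂ : |z| ≤ 1}, equality ∏_{1≤j<k≤n} |w_j − w_k| = n^{n/2} holds if and only if there exist u ∈ ℂ with |u| = 1 and a permutation σ of {1, …, n} such that w_{σ(j)} = u·e^{2πij/n} for every j = 1, …, n (i.e., after relabeling, the points form a rotated complete set of n-th roots of unity). -/
noncomputable section

open Finset

section Aux

open Matrix ComplexOrder

private lemma aux_prod_pairs {n : ℕ} (f : Fin n → Fin n → ℝ) :
    (∏ p ∈ Finset.univ.filter (fun p : Fin n × Fin n => p.1 < p.2), f p.1 p.2)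
      = ∏ i, ∏ j ∈ Ioi i, f i j := by
  rw [Finset.prod_sigma']
  exact Finset.prod_bij' (fun p _ => ⟨p.1, p.2⟩)
    (fun (x : Σ _ : Fin n, Fin n) _ => (x.1, x.2))
    (by simp) (by simp) (by simp) (by simp) (by simp)

private lemma aux_evals_eq (n : ℕ) (l : Fin n → ℝ) (h0 : ∀ i, 0 ≤ l i)
    (hn : 0 < n)
    (hs : ∑ i, l i ≤ (n:ℝ) * n) (hp : ∏ i, l i = (n:ℝ) ^ n) : ∀ i, l i = n := by
  have hnpos : (0:ℝ) < n := by positivity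
  have hpos : ∀ i, 0 < l i := by
    intro i
    rcases (h0 i).lt_or_eq with h | h
    · exact h
    · exfalso
      have h1 : (∏ i, l i) = 0 := Finset.prod_eq_zero (mem_univ i) h.symm
      rw [hp] at h1
      have : (0:ℝ) < (n:ℝ)^n := by positivity
      linarith
  have hle : ∀ i, l i ≤ (n:ℝ) * Real.exp (l i / n - 1) := by
    intro i
    have := Real.add_one_le_exp (l i / n - 1)
    have h2 : l i / n ≤ Real.exp (l i / n - 1) := by linarith
    calc l i = n * (l i / n) := by field_simp
    _ ≤ n * Real.exp (l i / n - 1) := by nlinarith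
  have hprodexp : (∏ i, (n:ℝ) * Real.exp (l i / n - 1))
      = (n:ℝ)^n * Real.exp (∑ i, (l i / n - 1)) := by
    rw [Finset.prod_mul_distrib, Finset.prod_const, Real.exp_sum, card_univ, Fintype.card_fin]
  have hsumle : (∑ i, (l i / n - 1)) ≤ 0 := by
    rw [Finset.sum_sub_distrib, ← Finset.sum_div, Finset.sum_const, card_univ, Fintype.card_fin]
    rw [sub_nonpos, div_le_iff₀ hnpos]
    simpa [mul_comm] using hs
  have hbound : (∏ i, (n:ℝ) * Real.exp (l i / n - 1)) ≤ (n:ℝ)^n := by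
    rw [hprodexp]
    nlinarith [Real.exp_le_one_iff.mpr hsumle, Real.exp_pos (∑ i, (l i / n - 1)),
      pow_pos hnpos n]
  intro i
  by_contra hne
  have hstrict : l i < (n:ℝ) * Real.exp (l i / n - 1) := by
    have hx : l i / n - 1 ≠ 0 := by
      intro h
      apply hne
      field_simp at h
      linarith
    have := Real.add_one_lt_exp hx
    have h2 : l i / n < Real.exp (l i / n - 1) := by linarith
    calc l i = n * (l i / n) := by field_simp
    _ < n * Real.exp (l i / n - 1) := by nlinarith
  have : (∏ i, l i) < ∏ i, (n:ℝ) * Real.exp (l i / n - 1) :=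
    Finset.prod_lt_prod (fun i _ => hpos i) (fun i _ => hle i) ⟨i, mem_univ i, hstrict⟩
  rw [hp] at this
  linarith

private lemma aux_trace_eq_sum_evals {n : ℕ} {A : Matrix (Fin n) (Fin n) ℂ}
    (hA : A.IsHermitian) :
    A.trace = ∑ i, (hA.eigenvalues i : ℂ) := by
  conv_lhs => rw [hA.spectral_theorem]
  rw [Unitary.conjStarAlgAut_apply, Matrix.trace_mul_comm, ← mul_assoc, Unitary.coe_star_mul_self, one_mul,
    Matrix.trace_diagonal]
  rfl

private lemma aux_eq_smul_one {n : ℕ} {A : Matrix (Fin n) (Fin n) ℂ} (hA : A.IsHermitian)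
    (h : ∀ i, hA.eigenvalues i = (n:ℝ)) : A = (n:ℂ) • 1 := by
  have hd : Matrix.diagonal (RCLike.ofReal ∘ hA.eigenvalues)
      = (n:ℂ) • (1 : Matrix (Fin n) (Fin n) ℂ) := by
    ext i j
    rcases eq_or_ne i j with rfl | hij
    · simp [h]
    · simp [Matrix.diagonal_apply_ne _ hij, Matrix.one_apply_ne hij]
  rw [hA.spectral_theorem, hd, map_smul, map_one]

private lemma aux_det_eq_prod {n : ℕ} {A : Matrix (Fin n) (Fin n) ℂ} (hA : A.IsHermitian) :
    A.det = ((∏ i, hA.eigenvalues i : ℝ) : ℂ) := by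
  have h := hA.det_eq_prod_eigenvalues
  push_cast at h ⊢
  convert h using 2 <;> rfl

private lemma aux_geom_sum_zero {n : ℕ} {z : ℂ} (h1 : z ^ n = 1) (h2 : z ≠ 1) :
    (∑ k : Fin n, z ^ (k : ℕ)) = 0 := by
  rw [Fin.sum_univ_eq_sum_range, geom_sum_eq h2, h1, sub_self, zero_div]

end Aux

/-- For `n ≥ 2` points `w₁, …, w_n` in the closed unit disc of `ℂ`, equality
`∏_{1 ≤ j < k ≤ n} |w_j − w_k| = n^{n/2}` holds if and only if, after relabeling,
the points form a rotated complete set of `n`-th roots of unity: there are `u ∈ ℂ`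
with `|u| = 1` and a permutation `σ` of the indices with
`w_{σ(j)} = u · e^{2πij/n}` for every `j`. -/
theorem prod_dist_eq_pow_iff (n : ℕ) (hn : 2 ≤ n) (w : Fin n → ℂ)
    (hw : ∀ i, ‖w i‖ ≤ 1) :
    (∏ p ∈ Finset.univ.filter (fun p : Fin n × Fin n => p.1 < p.2),
        ‖w p.1 - w p.2‖) = (n : ℝ) ^ ((n : ℝ) / 2) ↔
      ∃ (u : ℂ) (σ : Equiv.Perm (Fin n)), ‖u‖ = 1 ∧
        ∀ j : Fin n, w (σ j) =
          u * Complex.exp (2 * Real.pi * Complex.I * ((j : ℕ) : ℂ) / (n : ℂ)) := by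
  classical
  open Matrix ComplexOrder in
  have hn0 : n ≠ 0 := by omega
  haveI : NeZero n := ⟨hn0⟩
  have hnpos : (0:ℝ) < n := by positivity
  set V : Matrix (Fin n) (Fin n) ℂ := Matrix.vandermonde w with hV
  set G : Matrix (Fin n) (Fin n) ℂ := V * Vᴴ with hG
  set P : ℝ := ∏ p ∈ Finset.univ.filter (fun p : Fin n × Fin n => p.1 < p.2),
      ‖w p.1 - w p.2‖ with hPdef
  have hPnonneg : 0 ≤ P := Finset.prod_nonneg fun p _ => norm_nonneg _
  have habsdet : ‖V.det‖ = P := by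
    rw [hV, Matrix.det_vandermonde, norm_prod]
    rw [hPdef, aux_prod_pairs (fun i j => ‖w i - w j‖)]
    refine Finset.prod_congr rfl fun i _ => ?_
    rw [norm_prod]
    exact Finset.prod_congr rfl fun j _ => (norm_sub_rev _ _)
  have hdetG : G.det = ((P : ℂ)) ^ 2 := by
    rw [hG, Matrix.det_mul, Matrix.det_conjTranspose, Complex.star_def, Complex.mul_conj,
      Complex.normSq_eq_norm_sq, habsdet]
    push_cast; ring
  have Gdef : ∀ a b, G a b = ∑ k : Fin n, (w a * (starRingEnd ℂ) (w b)) ^ (k : ℕ) := by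
    intro a b
    simp [hG, hV, Matrix.mul_apply, Matrix.vandermonde, mul_pow,
      Matrix.conjTranspose_apply, map_pow]
  have hsq : ((n:ℝ) ^ ((n:ℝ)/2)) ^ (2:ℕ) = (n:ℝ) ^ (n:ℕ) := by
    rw [← Real.rpow_natCast ((n:ℝ) ^ ((n:ℝ)/2)) 2, ← Real.rpow_mul (le_of_lt hnpos)]
    norm_num
  set ζ : ℂ := Complex.exp (2 * ↑Real.pi * Complex.I / n) with hζdef
  have hζ : IsPrimitiveRoot ζ n := Complex.isPrimitiveRoot_exp n hn0
  have hζ0 : ζ ≠ 0 := Complex.exp_ne_zero _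
  have hζpow : ∀ j : Fin n,
      Complex.exp (2 * Real.pi * Complex.I * ((j : ℕ) : ℂ) / (n : ℂ)) = ζ ^ (j : ℕ) := by
    intro j
    rw [hζdef, ← Complex.exp_nat_mul]
    congr 1
    ring
  have habsζ : ‖ζ‖ = 1 := by
    have h1 : ‖ζ‖ ^ n = 1 := by
      rw [← norm_pow, hζ.pow_eq_one]; simp
    have h0 : 0 ≤ ‖ζ‖ := norm_nonneg _
    rcases lt_trichotomy (‖ζ‖) 1 with h | h | h
    · have := pow_lt_one₀ h0 h hn0; linarith
    · exact h
    · have := one_lt_pow₀ h hn0; linarith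
  constructor
  · -- forward direction
    intro hP
    have hPsq : P ^ 2 = (n:ℝ) ^ (n:ℕ) := by rw [hP]; exact hsq
    have hdetG' : G.det = ((n:ℝ) ^ (n:ℕ) : ℝ) := by
      rw [hdetG, ← hPsq]; push_cast; ring
    have hGps : G.PosSemidef := Matrix.posSemidef_self_mul_conjTranspose V
    have hH : G.IsHermitian := hGps.1
    -- trace bound
    have hGaa : ∀ a, G a a = ((∑ k : Fin n, Complex.normSq (w a) ^ (k:ℕ) : ℝ) : ℂ) := by
      intro a
      rw [Gdef a a]
      push_cast
      refine Finset.sum_congr rfl fun k _ => ?_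
      rw [Complex.mul_conj]
    have hnormSq_le : ∀ a, Complex.normSq (w a) ≤ 1 := by
      intro a
      rw [← Complex.sq_norm]
      nlinarith [hw a, norm_nonneg (w a)]
    have hnormSq_nonneg : ∀ a, 0 ≤ Complex.normSq (w a) := fun a => Complex.normSq_nonneg _
    have htrace : G.trace = ((∑ a, ∑ k : Fin n, Complex.normSq (w a) ^ (k:ℕ) : ℝ) : ℂ) := by
      rw [Matrix.trace]
      push_cast
      exact Finset.sum_congr rfl fun a _ => by
        have h := hGaa a; push_cast at h; exact h
    have hsum_evals : (∑ i, hH.eigenvalues i)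
        = ∑ a, ∑ k : Fin n, Complex.normSq (w a) ^ (k:ℕ) := by
      have h := aux_trace_eq_sum_evals hH
      rw [htrace] at h
      exact_mod_cast h.symm
    have htr_le : (∑ i, hH.eigenvalues i) ≤ (n:ℝ) * n := by
      rw [hsum_evals]
      calc (∑ a, ∑ k : Fin n, Complex.normSq (w a) ^ (k:ℕ))
          ≤ ∑ a : Fin n, (n:ℝ) := by
            refine Finset.sum_le_sum fun a _ => ?_
            calc (∑ k : Fin n, Complex.normSq (w a) ^ (k:ℕ))
                ≤ ∑ _k : Fin n, (1:ℝ) :=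
                  Finset.sum_le_sum fun k _ =>
                    pow_le_one₀ (hnormSq_nonneg a) (hnormSq_le a)
              _ = n := by simp
        _ = (n:ℝ) * n := by simp [mul_comm]
    have hprod_evals : (∏ i, hH.eigenvalues i) = (n:ℝ) ^ (n:ℕ) := by
      have h := aux_det_eq_prod hH
      rw [hdetG'] at h
      exact_mod_cast h.symm
    have hevals : ∀ i, hH.eigenvalues i = n :=
      aux_evals_eq n hH.eigenvalues (fun i => hGps.eigenvalues_nonneg i)
        (by omega) htr_le hprod_evals
    have hGid : G = (n:ℂ) • 1 := aux_eq_smul_one hH hevals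
    -- diagonal: |w a| = 1
    have habs1 : ∀ a, ‖w a‖ = 1 := by
      intro a
      have h1 : ((∑ k : Fin n, Complex.normSq (w a) ^ (k:ℕ) : ℝ) : ℂ) = (n:ℂ) := by
        rw [← hGaa a, hGid]; simp
      have h2 : (∑ k : Fin n, Complex.normSq (w a) ^ (k:ℕ)) = (n:ℝ) := by exact_mod_cast h1
      by_contra habs
      have hlt : Complex.normSq (w a) < 1 := by
        rcases lt_or_eq_of_le (hnormSq_le a) with h | h
        · exact h
        · exfalso; apply habs
          have := Complex.sq_norm (w a)
          nlinarith [norm_nonneg (w a)]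
      have hstrict : (∑ k : Fin n, Complex.normSq (w a) ^ (k:ℕ)) < ∑ _k : Fin n, (1:ℝ) := by
        refine Finset.sum_lt_sum (fun k _ => pow_le_one₀ (hnormSq_nonneg a) (hnormSq_le a))
          ⟨⟨1, by omega⟩, mem_univ _, ?_⟩
        simpa using hlt
      rw [h2] at hstrict
      simp at hstrict
    -- off-diagonal
    have hoff : ∀ a b, a ≠ b →
        (w a * (starRingEnd ℂ) (w b)) ^ n = 1 ∧ w a * (starRingEnd ℂ) (w b) ≠ 1 := by
      intro a b hab
      have h0 : (∑ k : Fin n, (w a * (starRingEnd ℂ) (w b)) ^ (k : ℕ)) = 0 := by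
        rw [← Gdef a b, hGid]
        simp [Matrix.one_apply_ne hab]
      set z := w a * (starRingEnd ℂ) (w b) with hz
      have hz1 : z ≠ 1 := by
        intro h
        rw [h] at h0
        simp at h0
        exact hn0 h0
      refine ⟨?_, hz1⟩
      have := aux_geom_sum_zero (n := n) (z := z)
      rw [Fin.sum_univ_eq_sum_range, geom_sum_eq hz1] at h0
      have hzn : z ^ n - 1 = 0 := by
        have hne : z - 1 ≠ 0 := sub_ne_zero.mpr hz1
        field_simp at h0
        simpa using h0
      linear_combination hzn
    -- injectivity of w
    have winj : Function.Injective w := by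
      intro a b hab
      by_contra hne
      have := (hoff a b hne).2
      apply this
      rw [hab, Complex.mul_conj, ← Complex.sq_norm, habs1 b]
      norm_num
    -- ratios are roots of unity
    have hw0 : w 0 ≠ 0 := by
      intro h
      have := habs1 0
      rw [h] at this
      simp at this
    have hconj0 : (starRingEnd ℂ) (w 0) ≠ 0 := by
      simpa using hw0
    have hr : ∀ a, (w a * (starRingEnd ℂ) (w 0)) ^ n = 1 := by
      intro a
      rcases eq_or_ne a 0 with rfl | ha
      · rw [Complex.mul_conj, ← Complex.sq_norm, habs1 _]
        norm_num
      · exact (hoff a 0 ha).1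
    have hex : ∀ a : Fin n, ∃ j : Fin n, ζ ^ (j : ℕ) = w a * (starRingEnd ℂ) (w 0) := by
      intro a
      obtain ⟨i, hi, hie⟩ := hζ.eq_pow_of_pow_eq_one (hr a)
      exact ⟨⟨i, hi⟩, hie⟩
    choose τ hτ using hex
    have hτinj : Function.Injective τ := by
      intro a b hab
      apply winj
      have := hτ a
      rw [hab, hτ b] at this
      exact mul_right_cancel₀ hconj0 this.symm
    have hτbij : Function.Bijective τ := Finite.injective_iff_bijective.mp hτinj
    set e := Equiv.ofBijective τ hτbij with he
    refine ⟨w 0, e.symm, habs1 0, fun j => ?_⟩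
    have h1 : ζ ^ ((τ (e.symm j)) : ℕ) = w (e.symm j) * (starRingEnd ℂ) (w 0) := hτ _
    have h2 : τ (e.symm j) = j := e.apply_symm_apply j
    rw [h2] at h1
    have hc : (starRingEnd ℂ) (w 0) = (w 0)⁻¹ := by
      symm
      apply inv_eq_of_mul_eq_one_right
      rw [Complex.mul_conj, ← Complex.sq_norm, habs1 0]
      norm_num
    rw [hc] at h1
    rw [hζpow j]
    field_simp at h1
    linear_combination -h1
  · -- backward direction
    rintro ⟨u, σ, hu, hwσ⟩
    have hwa : ∀ a, w a = u * ζ ^ ((σ.symm a : Fin n) : ℕ) := by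
      intro a
      have := hwσ (σ.symm a)
      rw [Equiv.apply_symm_apply, hζpow] at this
      exact this
    have hconjζ : ∀ m : ℕ, (starRingEnd ℂ) (ζ ^ m) = (ζ ^ m)⁻¹ := by
      intro m
      symm
      apply inv_eq_of_mul_eq_one_right
      rw [Complex.mul_conj, ← Complex.sq_norm, norm_pow, habsζ]
      norm_num
    have hconju : (starRingEnd ℂ) u = u⁻¹ := by
      symm
      apply inv_eq_of_mul_eq_one_right
      rw [Complex.mul_conj, ← Complex.sq_norm, hu]
      norm_num
    have hu0 : u ≠ 0 := by
      intro h; rw [h] at hu; simp at hu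
    have hGid : G = (n:ℂ) • 1 := by
      ext a b
      rw [Gdef a b]
      rcases eq_or_ne a b with rfl | hab
      · have hz : w a * (starRingEnd ℂ) (w a) = 1 := by
          rw [Complex.mul_conj, ← Complex.sq_norm, hwa a, norm_mul, hu, norm_pow, habsζ]
          norm_num
        rw [hz]
        simp
      · set ja := ((σ.symm a : Fin n) : ℕ) with hja
        set jb := ((σ.symm b : Fin n) : ℕ) with hjb
        have hz : w a * (starRingEnd ℂ) (w b) = ζ ^ ((ja : ℤ) - (jb : ℤ)) := by
          rw [hwa a, hwa b, _root_.map_mul, hconju, hconjζ, zpow_sub₀ hζ0, zpow_natCast, zpow_natCast]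
          field_simp
          ring
        have hjane : ja ≠ jb := by
          intro h
          apply hab
          have : σ.symm a = σ.symm b := Fin.ext h
          simpa using congrArg σ this
        have hd0 : (ja : ℤ) - (jb : ℤ) ≠ 0 := by
          intro h
          exact hjane (by omega)
        have hdlt : |(ja : ℤ) - (jb : ℤ)| < n := by
          have h1 : ja < n := (σ.symm a).isLt
          have h2 : jb < n := (σ.symm b).isLt
          rw [abs_lt]
          omega
        have hzne1 : w a * (starRingEnd ℂ) (w b) ≠ 1 := by
          rw [hz]
          intro h
          have hdvd := (hζ.zpow_eq_one_iff_dvd _).mp h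
          have : (n:ℤ) ≤ |(ja : ℤ) - (jb : ℤ)| :=
            Int.le_of_dvd (abs_pos.mpr hd0) ((dvd_abs _ _).mpr hdvd)
          omega
        have hzn : (w a * (starRingEnd ℂ) (w b)) ^ n = 1 := by
          rw [hz, ← zpow_natCast (ζ ^ ((ja : ℤ) - (jb : ℤ))), ← _root_.zpow_mul, mul_comm, _root_.zpow_mul,
            zpow_natCast, hζ.pow_eq_one, _root_.one_zpow]
        rw [aux_geom_sum_zero hzn hzne1]
        simp [Matrix.one_apply_ne hab]
    have hdet' : G.det = ((n:ℝ) ^ (n:ℕ) : ℝ) := by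
      rw [hGid]
      simp [Matrix.det_smul]
    rw [hdetG] at hdet'
    have hPsq : P ^ 2 = (n:ℝ) ^ (n:ℕ) := by exact_mod_cast hdet'
    have : P = Real.sqrt ((n:ℝ) ^ (n:ℕ)) := by
      rw [← hPsq, Real.sqrt_sq hPnonneg]
    rw [this, ← hsq, Real.sqrt_sq (by positivity)]
end
end
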